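/- The two product expressions for the MacMahon number are equal: for all nonnegative integers a, b, c, ∏_{i=1}^{a} ∏_{j=1}^{b} ∏_{k=1}^{c} (i+j+k−1)/(i+j+k−2) = [∏_{k=0}^{a−1} k! ∏_{k=0}^{b−1} k! ∏_{k=0}^{c−1} k! ∏_{k=0}^{a+b+c−1} k!] / [∏_{k=0}^{b+c−1} k! ∏_{k=0}^{a+c−1} k! ∏_{k=0}^{a+b−1} k!]. -/

import Mathlib

open Finset Polynomial

lemma telA (b : ℕ) (x : ℚ) (hx : 0 < x) :
    ∏ j ∈ Finset.Icc 1 b, ((x + j) / (x + j - 1)) = (x + b) / x := by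
  induction b with
  | zero => simp [div_self hx.ne']
  | succ b ih =>
    rw [Finset.prod_Icc_succ_top (Nat.le_add_left 1 b), ih]
    have h1 : x ≠ 0 := ne_of_gt hx
    have h2 : x + b ≠ 0 := by positivity
    push_cast
    have h3 : x + (b + 1) - 1 = x + b := by ring
    rw [h3]
    field_simp

lemma telB (a m : ℕ) :
    ∏ i ∈ Finset.Icc 1 a, ((m : ℚ) + i) = (m + a).factorial / m.factorial := by
  induction a with
  | zero => simp [div_self (show (m.factorial : ℚ) ≠ 0 from Nat.cast_ne_zero.mpr m.factorial_ne_zero)]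
  | succ a ih =>
    rw [Finset.prod_Icc_succ_top (Nat.le_add_left 1 a), ih]
    have : (m + (a + 1)).factorial = (m + a + 1) * (m + a).factorial := by
      rw [← Nat.add_assoc, Nat.factorial_succ]
    rw [this]
    have hm : (m.factorial : ℚ) ≠ 0 := Nat.cast_ne_zero.mpr m.factorial_ne_zero
    push_cast
    field_simp
    ring

lemma fprod_pos (n : ℕ) : 0 < ∏ k ∈ Finset.range n, (k.factorial : ℚ) := by
  apply Finset.prod_pos
  intro k _
  exact_mod_cast k.factorial_pos

lemma stepfac (a b c : ℕ) :
    ∏ i ∈ Finset.Icc 1 a, ∏ j ∈ Finset.Icc 1 b,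
        (((i : ℚ) + j + (c + 1) - 1) / ((i : ℚ) + j + (c + 1) - 2)) =
      ((c.factorial : ℚ) * ((a + b + c).factorial : ℚ)) /
        (((b + c).factorial : ℚ) * ((a + c).factorial : ℚ)) := by
  have h1 : ∀ i ∈ Finset.Icc 1 a, ∏ j ∈ Finset.Icc 1 b,
      (((i : ℚ) + j + (c + 1) - 1) / ((i : ℚ) + j + (c + 1) - 2)) =
      (((b + c : ℕ) : ℚ) + i) / (((c : ℕ) : ℚ) + i) := by
    intro i hi
    have hi1 : 1 ≤ i := (Finset.mem_Icc.mp hi).1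
    have hx : (0 : ℚ) < (i : ℚ) + c := by
      have : (1 : ℚ) ≤ (i : ℚ) := by exact_mod_cast hi1
      linarith [Nat.cast_nonneg (α := ℚ) c]
    have key : ∀ j ∈ Finset.Icc 1 b, (((i : ℚ) + j + (c + 1) - 1) / ((i : ℚ) + j + (c + 1) - 2)) =
        ((((i : ℚ) + c) + j) / (((i : ℚ) + c) + j - 1)) := by
      intro j _
      push_cast
      congr 1 <;> ring
    rw [Finset.prod_congr rfl key, telA b ((i : ℚ) + c) hx]
    push_cast
    congr 1 <;> ring
  rw [Finset.prod_congr rfl h1, Finset.prod_div_distrib, telB a (b + c), telB a c]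
  have e1 : b + c + a = a + b + c := by ring
  have e2 : c + a = a + c := by ring
  rw [e1, e2]
  have h2 : ((b + c).factorial : ℚ) ≠ 0 := Nat.cast_ne_zero.mpr (Nat.factorial_ne_zero _)
  have h3 : ((a + c).factorial : ℚ) ≠ 0 := Nat.cast_ne_zero.mpr (Nat.factorial_ne_zero _)
  have h4 : ((c).factorial : ℚ) ≠ 0 := Nat.cast_ne_zero.mpr (Nat.factorial_ne_zero _)
  field_simp

/-- The two product expressions for the MacMahon number agree. -/
theorem macmahon_two_products_eq (a b c : ℕ) :
    ∏ i ∈ Finset.Icc 1 a, ∏ j ∈ Finset.Icc 1 b, ∏ k ∈ Finset.Icc 1 c,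
        (((i : ℚ) + j + k - 1) / ((i : ℚ) + j + k - 2)) =
      ((∏ k ∈ Finset.range a, (k.factorial : ℚ)) * (∏ k ∈ Finset.range b, (k.factorial : ℚ)) *
          (∏ k ∈ Finset.range c, (k.factorial : ℚ)) *
          ∏ k ∈ Finset.range (a + b + c), (k.factorial : ℚ)) /
        ((∏ k ∈ Finset.range (b + c), (k.factorial : ℚ)) *
          (∏ k ∈ Finset.range (a + c), (k.factorial : ℚ)) *
          ∏ k ∈ Finset.range (a + b), (k.factorial : ℚ)) := by
  induction c with
  | zero =>
    simp only [Finset.Icc_self, Nat.add_zero]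
    simp only [show Finset.Icc 1 0 = (∅ : Finset ℕ) by decide, Finset.prod_empty,
      Finset.prod_const_one, Finset.range_zero, Nat.add_zero]
    rw [eq_comm, div_eq_one_iff_eq (by positivity)]
    ring
  | succ c ih =>
    have hsplit : ∀ (i j : ℕ), ∏ k ∈ Finset.Icc 1 (c + 1),
        (((i : ℚ) + j + k - 1) / ((i : ℚ) + j + k - 2)) =
        (∏ k ∈ Finset.Icc 1 c, (((i : ℚ) + j + k - 1) / ((i : ℚ) + j + k - 2))) *
        (((i : ℚ) + j + (c + 1) - 1) / ((i : ℚ) + j + (c + 1) - 2)) := by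
      intro i j
      rw [Finset.prod_Icc_succ_top (Nat.le_add_left 1 c)]
      push_cast
      ring_nf
    calc ∏ i ∈ Finset.Icc 1 a, ∏ j ∈ Finset.Icc 1 b, ∏ k ∈ Finset.Icc 1 (c + 1),
            (((i : ℚ) + j + k - 1) / ((i : ℚ) + j + k - 2))
        = (∏ i ∈ Finset.Icc 1 a, ∏ j ∈ Finset.Icc 1 b, ∏ k ∈ Finset.Icc 1 c,
            (((i : ℚ) + j + k - 1) / ((i : ℚ) + j + k - 2))) *
          (∏ i ∈ Finset.Icc 1 a, ∏ j ∈ Finset.Icc 1 b,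
            (((i : ℚ) + j + (c + 1) - 1) / ((i : ℚ) + j + (c + 1) - 2))) := by
          rw [← Finset.prod_mul_distrib]
          apply Finset.prod_congr rfl
          intro i _
          rw [← Finset.prod_mul_distrib]
          apply Finset.prod_congr rfl
          intro j _
          exact hsplit i j
      _ = _ := by
          rw [ih, stepfac]
          have r1 : Finset.range (c + 1) = Finset.range c ∪ {c} := by
            rw [Finset.range_add_one]; rw [Finset.union_comm]; rw [Finset.insert_eq]
          have e1 : a + b + (c + 1) = (a + b + c) + 1 := by ring
          have e2 : b + (c + 1) = (b + c) + 1 := by ring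
          have e3 : a + (c + 1) = (a + c) + 1 := by ring
          rw [e1, e2, e3, Finset.prod_range_succ, Finset.prod_range_succ,
            Finset.prod_range_succ, Finset.prod_range_succ]
          have hA := fprod_pos a
          have hB := fprod_pos b
          have hC := fprod_pos c
          have hABC := fprod_pos (a + b + c)
          have hBC := fprod_pos (b + c)
          have hAC := fprod_pos (a + c)
          have hABf := fprod_pos (a + b)
          have h2 : ((b + c).factorial : ℚ) ≠ 0 := Nat.cast_ne_zero.mpr (Nat.factorial_ne_zero _)
          have h3 : ((a + c).factorial : ℚ) ≠ 0 := Nat.cast_ne_zero.mpr (Nat.factorial_ne_zero _)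
          field_simp
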